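/- With the HGMP defined in the context, consider a single layer t with aggregation maps φ^t, ψ^t, prediction maps 𝒲, 𝒞, 𝒟 and combination maps 𝒰^t, ℬ^t. Suppose the input features of the permuted instance correspond to those of the original instance: û_{π₂(k)} = u_k for all k, b̂_{π₁(s)} = b_s for all s, and ê_{π₁(s), π₂(k)} = e_{s,k} for all s, k. Then the aggregated messages correspond, ĉ_{π₂(k)} = c_k and d̂_{π₁(s)} = d_s, and the updated features correspond: û'_{π₂(k)} = u'_k for all k and b̂'_{π₁(s)} = b'_s for all s, where the primed features are the outputs of one layer of the update rule in each instance. -/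
import Mathlib

/-- Single-layer equivariance of the heterogeneous graph message passing (HGMP):
if the input features of the permuted instance correspond to those of the original
instance, then the aggregated messages and the updated features correspond. -/
theorem hgmp_layer_equivariant {U B E M M' W0 C0 D0 : Type*}
    [AddCommMonoid M] [AddCommMonoid M'] {S K : ℕ}
    (φ : B → U → E → M) (ψ : U → B → E → M')
    (𝒲 : U → W0) (𝒞 : B → C0) (𝒟 : B → D0)
    (𝒰 : U → W0 → M → U) (ℬ : B → C0 → D0 → M' → B)
    (e e' : Fin S → Fin K → E) (u u' : Fin K → U) (b b' : Fin S → B)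
    (π₁ : Equiv.Perm (Fin S)) (π₂ : Equiv.Perm (Fin K))
    (he : ∀ s k, e' (π₁ s) (π₂ k) = e s k)
    (hu : ∀ k, u' (π₂ k) = u k) (hb : ∀ s, b' (π₁ s) = b s) :
    (∀ k, (∑ s, φ (b' s) (u' (π₂ k)) (e' s (π₂ k))) =
        ∑ s, φ (b s) (u k) (e s k)) ∧
    (∀ s, (∑ k, ψ (u' k) (b' (π₁ s)) (e' (π₁ s) k)) =
        ∑ k, ψ (u k) (b s) (e s k)) ∧
    (∀ k, 𝒰 (u' (π₂ k)) (𝒲 (u' (π₂ k))) (∑ s, φ (b' s) (u' (π₂ k)) (e' s (π₂ k))) =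
        𝒰 (u k) (𝒲 (u k)) (∑ s, φ (b s) (u k) (e s k))) ∧
    (∀ s, ℬ (b' (π₁ s)) (𝒞 (b' (π₁ s))) (𝒟 (b' (π₁ s)))
          (∑ k, ψ (u' k) (b' (π₁ s)) (e' (π₁ s) k)) =
        ℬ (b s) (𝒞 (b s)) (𝒟 (b s)) (∑ k, ψ (u k) (b s) (e s k))) := by
  have hc : ∀ k, (∑ s, φ (b' s) (u' (π₂ k)) (e' s (π₂ k))) =
      ∑ s, φ (b s) (u k) (e s k) := by
    intro k
    rw [← Equiv.sum_comp π₁ (fun s => φ (b' s) (u' (π₂ k)) (e' s (π₂ k)))]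
    exact Finset.sum_congr rfl fun s _ => by rw [hb, hu, he]
  have hd : ∀ s, (∑ k, ψ (u' k) (b' (π₁ s)) (e' (π₁ s) k)) =
      ∑ k, ψ (u k) (b s) (e s k) := by
    intro s
    rw [← Equiv.sum_comp π₂ (fun k => ψ (u' k) (b' (π₁ s)) (e' (π₁ s) k))]
    exact Finset.sum_congr rfl fun k _ => by rw [hb, hu, he]
  exact ⟨hc, hd, fun k => by rw [hc, hu], fun s => by rw [hd, hb]⟩
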